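/- For every real s > 0 and every real β, the pointwise likelihood loss satisfies s·e^β − β ≥ |β| + 2·min{0, 1 − log(2/s)}. -/
import Mathlib


open Real

/-- For every real `s > 0` and every real `β`, the pointwise likelihood loss satisfies
`s e^β − β ≥ |β| + 2 min{0, 1 − log(2/s)}`. -/
theorem likelihood_loss_lower_bound (s : ℝ) (hs : 0 < s) (β : ℝ) :
    |β| + 2 * min 0 (1 - Real.log (2 / s)) ≤ s * Real.exp β - β := by
  have key : 1 - Real.log (2 / s) ≤ s / 2 * Real.exp β - β := by
    have h := Real.add_one_le_exp (β + Real.log (s / 2))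
    rw [Real.exp_add, Real.exp_log (by positivity)] at h
    have hlog : Real.log (2 / s) = - Real.log (s / 2) := by
      rw [← Real.log_inv]; congr 1; field_simp
    nlinarith
  rcases le_total β 0 with hb | hb
  · have h1 : min 0 (1 - Real.log (2 / s)) ≤ 0 := min_le_left _ _
    have hexp : 0 < s * Real.exp β := by positivity
    rw [abs_of_nonpos hb]; linarith
  · rw [abs_of_nonneg hb]
    have hm : min 0 (1 - Real.log (2 / s)) ≤ 1 - Real.log (2 / s) :=
      min_le_right _ _
    nlinarith
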